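/- Let b_n be the number of pairs (λ, μ) of compositions of n into parts from {2,3} with PS(λ) ∩ PS(μ) = {n}. Then b_n satisfies the recursion b_n = b_{n-1} + b_{n-3} for n > 6. -/
import Mathlib

/-- The set of partial sums of a list: sums of nonempty prefixes. -/
def PSums (l : List ℕ) : Set ℕ :=
  {m | ∃ k, 0 < k ∧ k ≤ l.length ∧ (l.take k).sum = m}

/-- The number of indecomposable meanders on `n` nodes with all parts in `{2,3}`:
pairs `(λ, μ)` of compositions of `n` into parts `2` and `3` with
`PS(λ) ∩ PS(μ) = {n}`. -/
noncomputable def numIndec23 (n : ℕ) : ℕ :=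
  {p : List ℕ × List ℕ | (∀ x ∈ p.1, x = 2 ∨ x = 3) ∧ (∀ x ∈ p.2, x = 2 ∨ x = 3) ∧
    p.1.sum = n ∧ p.2.sum = n ∧ PSums p.1 ∩ PSums p.2 = {n}}.ncard

namespace Stmt5Aux

def Ok (l : List ℕ) : Prop := ∀ x ∈ l, x = 2 ∨ x = 3

def Mset (n : ℕ) : Set (List ℕ × List ℕ) :=
  {p | Ok p.1 ∧ Ok p.2 ∧ p.1.sum = n ∧ p.2.sum = n ∧ PSums p.1 ∩ PSums p.2 = {n}}

lemma numIndec23_eq (n : ℕ) : numIndec23 n = (Mset n).ncard := rfl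

lemma psums_append (l : List ℕ) (a : ℕ) : PSums (l ++ [a]) = PSums l ∪ {l.sum + a} := by
  ext m
  simp only [PSums, Set.mem_setOf_eq, Set.mem_union, Set.mem_singleton_iff,
    List.length_append, List.length_singleton]
  constructor
  · rintro ⟨k, hk0, hk, hs⟩
    rcases Nat.lt_or_ge k (l.length + 1) with h | h
    · left
      refine ⟨k, hk0, by omega, ?_⟩
      rwa [List.take_append_of_le_length (by omega)] at hs
    · right
      have hk' : k = l.length + 1 := by omega
      subst hk'
      rw [List.take_of_length_le (by simp)] at hs
      rw [List.sum_append] at hs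
      simpa using hs.symm
  · rintro (⟨k, hk0, hk, hs⟩ | rfl)
    · exact ⟨k, hk0, by omega, by rwa [List.take_append_of_le_length hk]⟩
    · refine ⟨l.length + 1, by omega, le_refl _, ?_⟩
      rw [List.take_of_length_le (by simp), List.sum_append]
      simp

lemma mem_psums_append {l : List ℕ} {a m : ℕ} (h : m ∈ PSums l) : m ∈ PSums (l ++ [a]) := by
  rw [psums_append]; exact Or.inl h

lemma mem_psums_le {l : List ℕ} {m : ℕ} (h : m ∈ PSums l) : m ≤ l.sum := by
  obtain ⟨k, _, _, rfl⟩ := h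
  calc (l.take k).sum ≤ (l.take k).sum + (l.drop k).sum := Nat.le_add_right _ _
    _ = l.sum := List.sum_take_add_sum_drop l k

lemma sum_mem_psums {l : List ℕ} (h : l ≠ []) : l.sum ∈ PSums l :=
  ⟨l.length, List.length_pos_iff.mpr h, le_refl _, by simp⟩

lemma ne_nil_of_sum {l : List ℕ} {n : ℕ} (hn : 0 < n) (h : l.sum = n) : l ≠ [] := by
  rintro rfl; simp at h; omega

lemma exists_concat {l : List ℕ} (h : l ≠ []) : ∃ L b, l = L ++ [b] := by
  rcases List.eq_nil_or_concat l with rfl | ⟨L, b, hb⟩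
  · exact absurd rfl h
  · exact ⟨L, b, by simpa [List.concat_eq_append] using hb⟩

lemma concat_injective {l₁ l₂ : List ℕ} {a b : ℕ} (h : l₁ ++ [a] = l₂ ++ [b]) :
    l₁ = l₂ ∧ a = b := by
  obtain ⟨h1, h2⟩ := List.append_inj' h rfl
  exact ⟨h1, by simpa using h2⟩

lemma pair_eq {p : List ℕ × List ℕ} {a b : List ℕ} (h1 : p.1 = a) (h2 : p.2 = b) :
    p = (a, b) := by
  cases p; cases h1; cases h2; rfl

lemma mset_swap {n : ℕ} {p : List ℕ × List ℕ} (h : p ∈ Mset n) : p.swap ∈ Mset n :=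
  ⟨h.2.1, h.1, h.2.2.2.1, h.2.2.1, by rw [Set.inter_comm]; exact h.2.2.2.2⟩

/-- The two compositions cannot end in the same part. -/
lemma last_ne {n : ℕ} (hn : 4 ≤ n) {p : List ℕ × List ℕ} (hp : p ∈ Mset n)
    {l₁ l₂ : List ℕ} {a : ℕ} (h1 : p.1 = l₁ ++ [a]) (h2 : p.2 = l₂ ++ [a]) : False := by
  obtain ⟨ok1, _, s1, s2, hint⟩ := hp
  have ha : a = 2 ∨ a = 3 := ok1 a (by rw [h1]; simp)
  have hs1 : l₁.sum + a = n := by rw [h1, List.sum_append] at s1; simpa using s1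
  have hs2 : l₂.sum + a = n := by rw [h2, List.sum_append] at s2; simpa using s2
  have h1ne : l₁ ≠ [] := by rintro rfl; simp at hs1; omega
  have h2ne : l₂ ≠ [] := by rintro rfl; simp at hs2; omega
  have m1 : l₁.sum ∈ PSums p.1 := by rw [h1]; exact mem_psums_append (sum_mem_psums h1ne)
  have m2 : l₁.sum ∈ PSums p.2 := by
    rw [h2]
    have : l₁.sum = l₂.sum := by omega
    rw [this]
    exact mem_psums_append (sum_mem_psums h2ne)
  have : l₁.sum ∈ ({n} : Set ℕ) := hint ▸ ⟨m1, m2⟩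
  simp at this
  omega

lemma ends3 {n : ℕ} (hn : 4 ≤ n) {p : List ℕ × List ℕ} (hp : p ∈ Mset n)
    (h : ∃ l, p.1 = l ++ [2]) : ∃ l, p.2 = l ++ [3] := by
  obtain ⟨l, hl⟩ := h
  have hne : p.2 ≠ [] := ne_nil_of_sum (by omega) hp.2.2.2.1
  obtain ⟨L, b, hb⟩ := exists_concat hne
  have hb2 : b = 2 ∨ b = 3 := hp.2.1 b (by rw [hb]; simp)
  rcases hb2 with rfl | rfl
  · exact absurd (last_ne hn hp hl hb) not_false
  · exact ⟨L, hb⟩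

lemma ends2 {n : ℕ} (hn : 4 ≤ n) {p : List ℕ × List ℕ} (hp : p ∈ Mset n)
    (h : ∃ l, p.1 = l ++ [3]) : ∃ l, p.2 = l ++ [2] := by
  obtain ⟨l, hl⟩ := h
  have hne : p.2 ≠ [] := ne_nil_of_sum (by omega) hp.2.2.2.1
  obtain ⟨L, b, hb⟩ := exists_concat hne
  have hb2 : b = 2 ∨ b = 3 := hp.2.1 b (by rw [hb]; simp)
  rcases hb2 with rfl | rfl
  · exact ⟨L, hb⟩
  · exact absurd (last_ne hn hp hl hb) not_false

def E (a n : ℕ) : Set (List ℕ × List ℕ) := {p | p ∈ Mset n ∧ ∃ l, p.1 = l ++ [a]}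
def EE (a n : ℕ) : Set (List ℕ × List ℕ) := {p | p ∈ Mset n ∧ ∃ l, p.1 = l ++ [a, 2]}

lemma mset_eq_union {n : ℕ} (hn : 1 ≤ n) : Mset n = E 2 n ∪ E 3 n := by
  ext p
  constructor
  · intro hp
    have hne : p.1 ≠ [] := ne_nil_of_sum (by omega) hp.2.2.1
    obtain ⟨L, b, hb⟩ := exists_concat hne
    have hb2 : b = 2 ∨ b = 3 := hp.1 b (by rw [hb]; simp)
    rcases hb2 with rfl | rfl
    · exact Or.inl ⟨hp, L, hb⟩
    · exact Or.inr ⟨hp, L, hb⟩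
  · rintro (⟨hp, _⟩ | ⟨hp, _⟩) <;> exact hp

lemma disjE (n : ℕ) : Disjoint (E 2 n) (E 3 n) := by
  rw [Set.disjoint_left]
  rintro p ⟨_, l, hl⟩ ⟨_, l', hl'⟩
  have := (concat_injective (hl ▸ hl')).2
  omega

lemma disjEE (n : ℕ) : Disjoint (EE 2 n) (EE 3 n) := by
  rw [Set.disjoint_left]
  rintro p ⟨_, l, hl⟩ ⟨_, l', hl'⟩
  have h : (l ++ [2]) ++ [2] = (l' ++ [3]) ++ [2] := by
    simpa [List.append_assoc] using (hl ▸ hl' : l ++ [2, 2] = l' ++ [3, 2])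
  have := (concat_injective (concat_injective h).1).2
  omega

lemma image_swap {n : ℕ} (hn : 4 ≤ n) : Prod.swap '' E 3 n = E 2 n := by
  ext p
  constructor
  · rintro ⟨q, ⟨hq, hq1⟩, rfl⟩
    exact ⟨mset_swap hq, ends2 hn hq hq1⟩
  · rintro ⟨hp, hp1⟩
    exact ⟨p.swap, ⟨mset_swap hp, ends3 hn hp hp1⟩, Prod.swap_swap p⟩

lemma e2_eq {n : ℕ} (hn : 5 ≤ n) : E 2 n = EE 2 n ∪ EE 3 n := by
  ext p
  constructor
  · rintro ⟨hp, l, hl⟩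
    have hlsum : l.sum + 2 = n := by
      have := hp.2.2.1; rw [hl, List.sum_append] at this; simpa using this
    have hlne : l ≠ [] := by rintro rfl; simp at hlsum; omega
    obtain ⟨L, b, rfl⟩ := exists_concat hlne
    have hb : b = 2 ∨ b = 3 := hp.1 b (by rw [hl]; simp)
    rcases hb with rfl | rfl
    · exact Or.inl ⟨hp, L, by rw [hl, List.append_assoc]; rfl⟩
    · exact Or.inr ⟨hp, L, by rw [hl, List.append_assoc]; rfl⟩
  · rintro (⟨hp, l, hl⟩ | ⟨hp, l, hl⟩)
    · exact ⟨hp, l ++ [2], by rw [hl, List.append_assoc]; rfl⟩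
    · exact ⟨hp, l ++ [3], by rw [hl, List.append_assoc]; rfl⟩

def phi1 (p : List ℕ × List ℕ) : List ℕ × List ℕ :=
  (p.1.dropLast.dropLast ++ [3], p.2.dropLast ++ [2])

def phi2 (p : List ℕ × List ℕ) : List ℕ × List ℕ :=
  (p.1.dropLast.dropLast ++ [2], p.2.dropLast)

lemma phi1_eval (l₁ l₂ : List ℕ) : phi1 (l₁ ++ [2, 2], l₂ ++ [3]) = (l₁ ++ [3], l₂ ++ [2]) := by
  have e1 : (l₁ ++ [2, 2]).dropLast.dropLast = l₁ := by
    rw [show l₁ ++ [2, 2] = (l₁ ++ [2]) ++ [2] from by rw [List.append_assoc]; rfl,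
      List.dropLast_concat, List.dropLast_concat]
  have e2 : (l₂ ++ [3]).dropLast = l₂ := List.dropLast_concat
  simp only [phi1, e1, e2]

lemma phi2_eval (l₁ l₂ : List ℕ) : phi2 (l₁ ++ [3, 2], l₂ ++ [3]) = (l₁ ++ [2], l₂) := by
  have e1 : (l₁ ++ [3, 2]).dropLast.dropLast = l₁ := by
    rw [show l₁ ++ [3, 2] = (l₁ ++ [3]) ++ [2] from by rw [List.append_assoc]; rfl,
      List.dropLast_concat, List.dropLast_concat]
  have e2 : (l₂ ++ [3]).dropLast = l₂ := List.dropLast_concat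
  simp only [phi2, e1, e2]

/-- set algebra helper -/
lemma interH1 {A B : Set ℕ} {u : ℕ} (hA : ∀ m ∈ A, m ≠ u) (hB : ∀ m ∈ B, m ≠ u)
    (hAB : ∀ m ∈ A, m ∉ B) : (A ∪ {u}) ∩ (B ∪ {u}) = {u} := by
  ext m
  simp only [Set.mem_inter_iff, Set.mem_union, Set.mem_singleton_iff]
  constructor
  · rintro ⟨h1 | h1, h2 | h2⟩
    · exact absurd h2 (hAB _ h1)
    · exact h2
    · exact h1
    · exact h1
  · rintro rfl
    exact ⟨Or.inr rfl, Or.inr rfl⟩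

lemma interH2 {A B : Set ℕ} {u : ℕ} (hu : u ∈ B) (hAB : ∀ m ∈ A, m ∉ B) :
    (A ∪ {u}) ∩ B = {u} := by
  ext m
  simp only [Set.mem_inter_iff, Set.mem_union, Set.mem_singleton_iff]
  constructor
  · rintro ⟨h1 | h1, h2⟩
    · exact absurd h2 (hAB _ h1)
    · exact h1
  · rintro rfl
    exact ⟨Or.inr rfl, hu⟩

lemma interH3 {A B : Set ℕ} {a u : ℕ} (hA : ∀ m ∈ A, m ≠ u) (ha : a ≠ u) (haB : a ∉ B)
    (hB : ∀ m ∈ B, m ≠ u) (hAB : ∀ m ∈ A, m ∉ B) : ((A ∪ {a}) ∪ {u}) ∩ (B ∪ {u}) = {u} := by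
  ext m
  simp only [Set.mem_inter_iff, Set.mem_union, Set.mem_singleton_iff]
  constructor
  · rintro ⟨(h1 | h1) | h1, h2 | h2⟩
    · exact absurd h2 (hAB _ h1)
    · exact h2
    · subst h1; exact absurd h2 haB
    · exact h2
    · exact h1
    · exact h1
  · rintro rfl
    exact ⟨Or.inr rfl, Or.inr rfl⟩

lemma interH4 {A B : Set ℕ} {a b u : ℕ} (hA : ∀ m ∈ A, m ≠ u) (ha : a ≠ u) (hb : b ≠ u)
    (hab : a ≠ b) (haB : a ∉ B) (hbA : b ∉ A) (hB : ∀ m ∈ B, m ≠ u)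
    (hAB : ∀ m ∈ A, m ∉ B) : ((A ∪ {a}) ∪ {u}) ∩ ((B ∪ {b}) ∪ {u}) = {u} := by
  ext m
  simp only [Set.mem_inter_iff, Set.mem_union, Set.mem_singleton_iff]
  constructor
  · rintro ⟨(h1 | h1) | h1, (h2 | h2) | h2⟩
    · exact absurd h2 (hAB _ h1)
    · subst h2; exact absurd h1 hbA
    · exact h2
    · subst h1; exact absurd h2 haB
    · subst h1; exact absurd h2 hab
    · exact h2
    · exact h1
    · exact h1
    · exact h1
  · rintro rfl
    exact ⟨Or.inr rfl, Or.inr rfl⟩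

lemma phi1_image {n : ℕ} (hn : 7 ≤ n) : phi1 '' EE 2 n = E 3 (n - 1) := by
  ext q
  constructor
  · rintro ⟨p, ⟨hp, l₁, h1⟩, rfl⟩
    obtain ⟨l₂, h2⟩ := ends3 (n := n) (by omega) hp ⟨l₁ ++ [2], by rw [h1, List.append_assoc]; rfl⟩
    obtain ⟨ok1, ok2, s1, s2, hint⟩ := hp
    have hs1 : l₁.sum + 4 = n := by rw [h1, List.sum_append] at s1; simpa using s1
    have hs2 : l₂.sum + 3 = n := by rw [h2, List.sum_append] at s2; simpa using s2
    have hdisj : ∀ m ∈ PSums l₁, m ∉ PSums l₂ := by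
      intro m hm hm'
      have hb : m ≤ l₁.sum := mem_psums_le hm
      have h1m : m ∈ PSums p.1 := by
        rw [h1, show l₁ ++ [2, 2] = (l₁ ++ [2]) ++ [2] from by rw [List.append_assoc]; rfl]
        exact mem_psums_append (mem_psums_append hm)
      have h2m : m ∈ PSums p.2 := by rw [h2]; exact mem_psums_append hm'
      have : m ∈ ({n} : Set ℕ) := hint ▸ ⟨h1m, h2m⟩
      simp at this; omega
    have hrw : p = (l₁ ++ [2, 2], l₂ ++ [3]) := pair_eq h1 h2
    rw [hrw, phi1_eval]
    refine ⟨⟨?_, ?_, ?_, ?_, ?_⟩, l₁, rfl⟩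
    · intro x hx
      rcases List.mem_append.mp hx with h | h
      · exact ok1 x (by rw [h1]; simp [h])
      · simp at h; omega
    · intro x hx
      rcases List.mem_append.mp hx with h | h
      · exact ok2 x (by rw [h2]; simp [h])
      · simp at h; omega
    · rw [List.sum_append]; simp; omega
    · rw [List.sum_append]; simp; omega
    · rw [psums_append, psums_append,
        show l₁.sum + 3 = n - 1 from by omega, show l₂.sum + 2 = n - 1 from by omega]
      refine interH1 ?_ ?_ hdisj
      · intro m hm; have := mem_psums_le hm; omega
      · intro m hm; have := mem_psums_le hm; omega
  · rintro ⟨hq, l₁, h1⟩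
    obtain ⟨l₂, h2⟩ := ends2 (n := n - 1) (by omega) hq ⟨l₁, h1⟩
    obtain ⟨ok1, ok2, s1, s2, hint⟩ := hq
    have hs1 : l₁.sum + 3 = n - 1 := by rw [h1, List.sum_append] at s1; simpa using s1
    have hs2 : l₂.sum + 2 = n - 1 := by rw [h2, List.sum_append] at s2; simpa using s2
    have hdisj : ∀ m ∈ PSums l₁, m ∉ PSums l₂ := by
      intro m hm hm'
      have hb : m ≤ l₁.sum := mem_psums_le hm
      have h1m : m ∈ PSums q.1 := by rw [h1]; exact mem_psums_append hm
      have h2m : m ∈ PSums q.2 := by rw [h2]; exact mem_psums_append hm'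
      have : m ∈ ({n - 1} : Set ℕ) := hint ▸ ⟨h1m, h2m⟩
      simp at this; omega
    refine ⟨(l₁ ++ [2, 2], l₂ ++ [3]), ⟨⟨?_, ?_, ?_, ?_, ?_⟩, l₁, rfl⟩, ?_⟩
    · intro x hx
      rcases List.mem_append.mp hx with h | h
      · exact ok1 x (by rw [h1]; simp [h])
      · simp at h; omega
    · intro x hx
      rcases List.mem_append.mp hx with h | h
      · exact ok2 x (by rw [h2]; simp [h])
      · simp at h; omega
    · rw [List.sum_append]; simp; omega
    · rw [List.sum_append]; simp; omega
    · have e1 : (l₁ ++ [2] : List ℕ).sum + 2 = n := by rw [List.sum_append]; simp; omega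
      have e2 : l₁.sum + 2 = n - 2 := by omega
      have e3 : l₂.sum + 3 = n := by omega
      rw [show l₁ ++ [2, 2] = (l₁ ++ [2]) ++ [2] from by rw [List.append_assoc]; rfl,
        psums_append, psums_append, psums_append, e1, e2, e3]
      refine interH3 ?_ (by omega) ?_ ?_ hdisj
      · intro m hm; have := mem_psums_le hm; omega
      · intro hm; have := mem_psums_le hm; omega
      · intro m hm; have := mem_psums_le hm; omega
    · rw [phi1_eval, ← h1, ← h2]

lemma phi2_image {n : ℕ} (hn : 7 ≤ n) : phi2 '' EE 3 n = E 2 (n - 3) := by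
  ext q
  constructor
  · rintro ⟨p, ⟨hp, l₁, h1⟩, rfl⟩
    obtain ⟨l₂, h2⟩ := ends3 (n := n) (by omega) hp ⟨l₁ ++ [3], by rw [h1, List.append_assoc]; rfl⟩
    obtain ⟨ok1, ok2, s1, s2, hint⟩ := hp
    have hs1 : l₁.sum + 5 = n := by rw [h1, List.sum_append] at s1; simpa using s1
    have hs2 : l₂.sum + 3 = n := by rw [h2, List.sum_append] at s2; simpa using s2
    have hdisj : ∀ m ∈ PSums l₁, m ∉ PSums l₂ := by
      intro m hm hm'
      have hb : m ≤ l₁.sum := mem_psums_le hm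
      have h1m : m ∈ PSums p.1 := by
        rw [h1, show l₁ ++ [3, 2] = (l₁ ++ [3]) ++ [2] from by rw [List.append_assoc]; rfl]
        exact mem_psums_append (mem_psums_append hm)
      have h2m : m ∈ PSums p.2 := by rw [h2]; exact mem_psums_append hm'
      have : m ∈ ({n} : Set ℕ) := hint ▸ ⟨h1m, h2m⟩
      simp at this; omega
    have hl₂ne : l₂ ≠ [] := ne_nil_of_sum (n := l₂.sum) (by omega) rfl
    have hrw : p = (l₁ ++ [3, 2], l₂ ++ [3]) := pair_eq h1 h2
    rw [hrw, phi2_eval]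
    refine ⟨⟨?_, ?_, ?_, ?_, ?_⟩, l₁, rfl⟩
    · intro x hx
      rcases List.mem_append.mp hx with h | h
      · exact ok1 x (by rw [h1]; simp [h])
      · simp at h; omega
    · intro x hx
      exact ok2 x (by rw [h2]; simp [hx])
    · rw [List.sum_append]; simp; omega
    · show l₂.sum = n - 3; omega
    · rw [psums_append, show l₁.sum + 2 = n - 3 from by omega]
      refine interH2 ?_ hdisj
      rw [show n - 3 = l₂.sum from by omega]
      exact sum_mem_psums hl₂ne
  · rintro ⟨hq, l₁, h1⟩
    obtain ⟨l₂, h2⟩ := ends3 (n := n - 3) (by omega) hq ⟨l₁, h1⟩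
    obtain ⟨ok1, ok2, s1, s2, hint⟩ := hq
    have hs1 : l₁.sum + 2 = n - 3 := by rw [h1, List.sum_append] at s1; simpa using s1
    have hs2 : l₂.sum + 3 = n - 3 := by rw [h2, List.sum_append] at s2; simpa using s2
    have hdisj : ∀ m ∈ PSums l₁, m ∉ PSums l₂ := by
      intro m hm hm'
      have hb : m ≤ l₁.sum := mem_psums_le hm
      have h1m : m ∈ PSums q.1 := by rw [h1]; exact mem_psums_append hm
      have h2m : m ∈ PSums q.2 := by rw [h2]; exact mem_psums_append hm'
      have : m ∈ ({n - 3} : Set ℕ) := hint ▸ ⟨h1m, h2m⟩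
      simp at this; omega
    refine ⟨(l₁ ++ [3, 2], (l₂ ++ [3]) ++ [3]), ⟨⟨?_, ?_, ?_, ?_, ?_⟩, l₁, rfl⟩, ?_⟩
    · intro x hx
      rcases List.mem_append.mp hx with h | h
      · exact ok1 x (by rw [h1]; simp [h])
      · simp at h; omega
    · intro x hx
      rcases List.mem_append.mp hx with h | h
      · exact ok2 x (by rw [h2]; simp [h])
      · simp at h; omega
    · rw [List.sum_append]; simp; omega
    · rw [List.sum_append, List.sum_append]; simp; omega
    · have e1 : (l₁ ++ [3] : List ℕ).sum + 2 = n := by rw [List.sum_append]; simp; omega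
      have e2 : (l₂ ++ [3] : List ℕ).sum + 3 = n := by rw [List.sum_append]; simp; omega
      have e3 : l₁.sum + 3 = n - 2 := by omega
      have e4 : l₂.sum + 3 = n - 3 := by omega
      rw [show l₁ ++ [3, 2] = (l₁ ++ [3]) ++ [2] from by rw [List.append_assoc]; rfl,
        psums_append, psums_append, psums_append, psums_append, e1, e2, e3, e4]
      refine interH4 ?_ (by omega) (by omega) (by omega) ?_ ?_ ?_ hdisj
      · intro m hm; have := mem_psums_le hm; omega
      · intro hm; have := mem_psums_le hm; omega
      · intro hm; have := mem_psums_le hm; omega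
      · intro m hm; have := mem_psums_le hm; omega
    · rw [phi2_eval, ← h1]
      have : q.2 = l₂ ++ [3] := h2
      rw [← this]

lemma phi1_injOn {n : ℕ} (hn : 7 ≤ n) : Set.InjOn phi1 (EE 2 n) := by
  rintro p ⟨hp, l₁, h1⟩ q ⟨hq, l₁', h1'⟩ heq
  obtain ⟨l₂, h2⟩ := ends3 (n := n) (by omega) hp ⟨l₁ ++ [2], by rw [h1, List.append_assoc]; rfl⟩
  obtain ⟨l₂', h2'⟩ := ends3 (n := n) (by omega) hq ⟨l₁' ++ [2], by rw [h1', List.append_assoc]; rfl⟩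
  rw [pair_eq h1 h2, pair_eq h1' h2', phi1_eval, phi1_eval] at heq
  have e1 : l₁ = l₁' := (concat_injective (by exact congrArg Prod.fst heq)).1
  have e2 : l₂ = l₂' := (concat_injective (by exact congrArg Prod.snd heq)).1
  rw [pair_eq h1 h2, pair_eq h1' h2', e1, e2]

lemma phi2_injOn {n : ℕ} (hn : 7 ≤ n) : Set.InjOn phi2 (EE 3 n) := by
  rintro p ⟨hp, l₁, h1⟩ q ⟨hq, l₁', h1'⟩ heq
  obtain ⟨l₂, h2⟩ := ends3 (n := n) (by omega) hp ⟨l₁ ++ [3], by rw [h1, List.append_assoc]; rfl⟩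
  obtain ⟨l₂', h2'⟩ := ends3 (n := n) (by omega) hq ⟨l₁' ++ [3], by rw [h1', List.append_assoc]; rfl⟩
  rw [pair_eq h1 h2, pair_eq h1' h2', phi2_eval, phi2_eval] at heq
  have e1 : l₁ = l₁' := (concat_injective (by exact congrArg Prod.fst heq)).1
  have e2 : l₂ = l₂' := by exact congrArg Prod.snd heq
  rw [pair_eq h1 h2, pair_eq h1' h2', e1, e2]

lemma len_le_sum {l : List ℕ} (h : Ok l) : l.length ≤ l.sum := by
  induction l with
  | nil => simp
  | cons a t ih =>
    have ha : a = 2 ∨ a = 3 := h a (by simp)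
    have := ih (fun x hx => h x (by simp [hx]))
    simp only [List.length_cons, List.sum_cons]
    omega

lemma mset_finite (n : ℕ) : (Mset n).Finite := by
  have hS : {l : List ℕ | Ok l ∧ l.sum = n}.Finite := by
    have h4 : {l : List (Fin 4) | l.length ≤ n}.Finite := List.finite_length_le (Fin 4) n
    refine Set.Finite.subset (h4.image (List.map Fin.val)) ?_
    rintro l ⟨hok, hsum⟩
    refine ⟨l.map (fun x => (⟨x % 4, Nat.mod_lt _ (by norm_num)⟩ : Fin 4)), ?_, ?_⟩
    · simp only [Set.mem_setOf_eq, List.length_map]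
      calc l.length ≤ l.sum := len_le_sum hok
        _ = n := hsum
    · rw [List.map_map]
      conv_rhs => rw [show l = l.map id from (List.map_id l).symm]
      refine List.map_congr_left ?_
      intro x hx
      have := hok x hx
      simp only [Function.comp_apply, id_eq]
      omega
  have : Mset n ⊆ {l : List ℕ | Ok l ∧ l.sum = n} ×ˢ {l : List ℕ | Ok l ∧ l.sum = n} := by
    rintro p ⟨ok1, ok2, s1, s2, _⟩
    exact ⟨⟨ok1, s1⟩, ⟨ok2, s2⟩⟩
  exact Set.Finite.subset (hS.prod hS) this

lemma e_finite (a n : ℕ) : (E a n).Finite :=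
  Set.Finite.subset (mset_finite n) (fun p hp => hp.1)

lemma ee_finite (a n : ℕ) : (EE a n).Finite :=
  Set.Finite.subset (mset_finite n) (fun p hp => hp.1)

lemma card_e_swap {n : ℕ} (hn : 4 ≤ n) : (E 2 n).ncard = (E 3 n).ncard := by
  rw [← image_swap hn, Set.ncard_image_of_injective _ Prod.swap_injective]

lemma card_mset {n : ℕ} (hn : 4 ≤ n) : (Mset n).ncard = 2 * (E 2 n).ncard := by
  rw [mset_eq_union (by omega), Set.ncard_union_eq (disjE n) (e_finite 2 n) (e_finite 3 n),
    ← card_e_swap hn]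
  ring

end Stmt5Aux

open Stmt5Aux in
/-- For `n > 6`, the number `b_n` of indecomposable meanders on `n` nodes with parts
in `{2,3}` satisfies `b_n = b_{n-1} + b_{n-3}`. -/
theorem stmt5 (n : ℕ) (hn : 6 < n) :
    numIndec23 n = numIndec23 (n - 1) + numIndec23 (n - 3) := by
  have h7 : 7 ≤ n := hn
  rw [numIndec23_eq, numIndec23_eq, numIndec23_eq,
    card_mset (by omega), card_mset (by omega), card_mset (by omega)]
  have key : (E 2 n).ncard = (E 2 (n - 1)).ncard + (E 2 (n - 3)).ncard := by
    rw [e2_eq (by omega),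
      Set.ncard_union_eq (disjEE n) (ee_finite 2 n) (ee_finite 3 n),
      ← Set.ncard_image_of_injOn (phi1_injOn h7), ← Set.ncard_image_of_injOn (phi2_injOn h7),
      phi1_image h7, phi2_image h7,
      show (E 3 (n - 1)).ncard = (E 2 (n - 1)).ncard from (card_e_swap (by omega)).symm]
  omega
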